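/- Consider the polynomial ring ℂ[x₁,x₂,z] with bracket {f,g} = Σ_{i=1,2; j=0,1,2} a_{i,j} zʲ (∂_{xᵢ}f · ∂_z g − ∂_z f · ∂_{xᵢ} g) for constants a_{i,j} ∈ ℂ. If this bracket satisfies the Jacobi identity, then the polynomials P₁(z) = a_{1,0} + a_{1,1}z + a_{1,2}z² and P₂(z) = a_{2,0} + a_{2,1}z + a_{2,2}z² satisfy P₁′·P₂ = P₁·P₂′. -/
import Mathlib


open MvPolynomial

/-- For the bracket `{f,g} = Σ a_{i,j} z^j (∂_{xᵢ}f ∂_z g − ∂_z f ∂_{xᵢ} g)`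
on `ℂ[x₁,x₂,z]`, the Jacobi identity forces `P₁' P₂ = P₁ P₂'`. -/
theorem jacobi_identity_gives_wronskian (a : Fin 2 → Fin 3 → ℂ)
    (br : MvPolynomial (Fin 3) ℂ → MvPolynomial (Fin 3) ℂ → MvPolynomial (Fin 3) ℂ)
    (hbr : ∀ f g, br f g = ∑ i : Fin 2, ∑ j : Fin 3,
        C (a i j) * (X (2 : Fin 3)) ^ (j : ℕ) *
          (pderiv (i.castSucc) f * pderiv (2 : Fin 3) g
            - pderiv (2 : Fin 3) f * pderiv (i.castSucc) g))
    (hjac : ∀ f g h, br f (br g h) + br g (br h f) + br h (br f g) = 0) :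
    Polynomial.derivative (∑ j : Fin 3, Polynomial.C (a 0 j) * Polynomial.X ^ (j : ℕ)) *
        (∑ j : Fin 3, Polynomial.C (a 1 j) * Polynomial.X ^ (j : ℕ))
      = (∑ j : Fin 3, Polynomial.C (a 0 j) * Polynomial.X ^ (j : ℕ)) *
        Polynomial.derivative (∑ j : Fin 3, Polynomial.C (a 1 j) * Polynomial.X ^ (j : ℕ)) := by
  have key : ∀ t : ℂ,
      (a 0 1 + 2 * a 0 2 * t) * (a 1 0 + a 1 1 * t + a 1 2 * t ^ 2)
        = (a 0 0 + a 0 1 * t + a 0 2 * t ^ 2) * (a 1 1 + 2 * a 1 2 * t) := by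
    intro t
    have E := hjac (X 0) (X 1) (X 2)
    rw [hbr, hbr, hbr, hbr, hbr, hbr] at E
    have E2 := congrArg (eval (fun k : Fin 3 => if k = 2 then t else 0)) E
    simp [Fin.sum_univ_two, Fin.sum_univ_three, pderiv_X] at E2
    linear_combination -E2
  have goalfun : ∀ t : ℂ,
      Polynomial.eval t (Polynomial.derivative (∑ j : Fin 3, Polynomial.C (a 0 j) * Polynomial.X ^ (j : ℕ)) *
        (∑ j : Fin 3, Polynomial.C (a 1 j) * Polynomial.X ^ (j : ℕ)))
      = Polynomial.eval t ((∑ j : Fin 3, Polynomial.C (a 0 j) * Polynomial.X ^ (j : ℕ)) *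
        Polynomial.derivative (∑ j : Fin 3, Polynomial.C (a 1 j) * Polynomial.X ^ (j : ℕ))) := by
    intro t
    simp [Fin.sum_univ_three]
    linear_combination key t
  exact Polynomial.funext goalfun
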